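/- Let (P, ≤) be a countably infinite partial order with the extension property: for all pairwise disjoint finite sets A, B, C ⊆ P such that a < b for all a ∈ A, b ∈ B, and ¬(c ≤ a) for all a ∈ A, c ∈ C, and ¬(b ≤ c) for all b ∈ B, c ∈ C, there exists x ∈ P \ (A ∪ B ∪ C) with a < x for all a ∈ A, x < b for all b ∈ B, and x incomparable to every c ∈ C. (Such a partial order is the universal homogeneous partial order ℙ.) Then its distinguishing number is 2: there exists a coloring c : P → Bool such that the only order automorphism g of P with c ∘ g = c is the identity, while P does have a nontrivial order automorphism. -/

import Mathlib

namespace UPO12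

variable {P : Type*} [PartialOrder P]

attribute [local instance] Classical.propDecidable

/-- The extension property. -/
def Ext (P : Type*) [PartialOrder P] : Prop :=
  ∀ A B C : Finset P, Disjoint A B → Disjoint A C → Disjoint B C →
      (∀ a ∈ A, ∀ b ∈ B, a < b) →
      (∀ a ∈ A, ∀ c ∈ C, ¬ c ≤ a) →
      (∀ b ∈ B, ∀ c ∈ C, ¬ b ≤ c) →
      ∃ x, x ∉ A ∧ x ∉ B ∧ x ∉ C ∧ (∀ a ∈ A, a < x) ∧ (∀ b ∈ B, x < b) ∧
        ∀ c ∈ C, x ≠ c ∧ ¬ x ≤ c ∧ ¬ c ≤ x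

def Valid (L : List (P × P)) : Prop :=
  ∀ pq ∈ L, ∀ pq' ∈ L, ((pq : P × P).1 ≤ (pq' : P × P).1 ↔ pq.2 ≤ pq'.2)

theorem Valid.snd_inj {L : List (P × P)} (h : Valid L) {p p' q : P}
    (h1 : (p, q) ∈ L) (h2 : (p', q) ∈ L) : p = p' := by
  have a := (h _ h1 _ h2).2 le_rfl
  have b := (h _ h2 _ h1).2 le_rfl
  exact le_antisymm a b

theorem Valid.fst_inj {L : List (P × P)} (h : Valid L) {p q q' : P}
    (h1 : (p, q) ∈ L) (h2 : (p, q') ∈ L) : q = q' := by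
  have a := (h _ h1 _ h2).1 le_rfl
  have b := (h _ h2 _ h1).1 le_rfl
  exact le_antisymm a b

theorem extend_fwd (hext : Ext P) {L : List (P × P)} (h : Valid L) (x : P) :
    ∃ y, Valid (L ++ [(x, y)]) := by
  classical
  by_cases hx : ∃ q, (x, q) ∈ L
  · obtain ⟨q, hq⟩ := hx
    refine ⟨q, ?_⟩
    intro pq hpq pq' hpq'
    rcases List.mem_append.1 hpq with h1 | h1 <;>
      rcases List.mem_append.1 hpq' with h2 | h2
    · exact h _ h1 _ h2
    · simp only [List.mem_singleton] at h2; subst h2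
      exact h _ h1 _ hq
    · simp only [List.mem_singleton] at h1; subst h1
      exact h _ hq _ h2
    · simp only [List.mem_singleton] at h1 h2; subst h1; subst h2; simp
  · push_neg at hx
    set A : Finset P := ((L.filter (fun pq => pq.1 < x)).map Prod.snd).toFinset with hA
    set B : Finset P := ((L.filter (fun pq => x < pq.1)).map Prod.snd).toFinset with hB
    set C : Finset P :=
      ((L.filter (fun pq => ¬ pq.1 ≤ x ∧ ¬ x ≤ pq.1)).map Prod.snd).toFinset with hC
    have memA : ∀ q, q ∈ A ↔ ∃ p, (p, q) ∈ L ∧ p < x := by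
      intro q
      simp only [hA, List.mem_toFinset, List.mem_map, List.mem_filter]
      constructor
      · rintro ⟨⟨p, q'⟩, ⟨hm, hf⟩, rfl⟩
        exact ⟨p, hm, by simpa using hf⟩
      · rintro ⟨p, hm, hf⟩
        exact ⟨(p, q), ⟨hm, by simpa using hf⟩, rfl⟩
    have memB : ∀ q, q ∈ B ↔ ∃ p, (p, q) ∈ L ∧ x < p := by
      intro q
      simp only [hB, List.mem_toFinset, List.mem_map, List.mem_filter]
      constructor
      · rintro ⟨⟨p, q'⟩, ⟨hm, hf⟩, rfl⟩
        exact ⟨p, hm, by simpa using hf⟩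
      · rintro ⟨p, hm, hf⟩
        exact ⟨(p, q), ⟨hm, by simpa using hf⟩, rfl⟩
    have memC : ∀ q, q ∈ C ↔ ∃ p, (p, q) ∈ L ∧ ¬ p ≤ x ∧ ¬ x ≤ p := by
      intro q
      simp only [hC, List.mem_toFinset, List.mem_map, List.mem_filter]
      constructor
      · rintro ⟨⟨p, q'⟩, ⟨hm, hf⟩, rfl⟩
        exact ⟨p, hm, by simpa using of_decide_eq_true hf⟩
      · rintro ⟨p, hm, hf⟩
        exact ⟨(p, q), ⟨hm, decide_eq_true (by simpa using hf)⟩, rfl⟩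
    have dAB : Disjoint A B := by
      rw [Finset.disjoint_left]
      intro q hqa hqb
      obtain ⟨p, hm, hf⟩ := (memA q).1 hqa
      obtain ⟨p', hm', hf'⟩ := (memB q).1 hqb
      have := h.snd_inj hm hm'
      subst this
      exact absurd (hf.trans hf') (lt_irrefl _)
    have dAC : Disjoint A C := by
      rw [Finset.disjoint_left]
      intro q hqa hqb
      obtain ⟨p, hm, hf⟩ := (memA q).1 hqa
      obtain ⟨p', hm', hf'⟩ := (memC q).1 hqb
      have := h.snd_inj hm hm'
      subst this
      exact hf'.1 hf.le
    have dBC : Disjoint B C := by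
      rw [Finset.disjoint_left]
      intro q hqa hqb
      obtain ⟨p, hm, hf⟩ := (memB q).1 hqa
      obtain ⟨p', hm', hf'⟩ := (memC q).1 hqb
      have := h.snd_inj hm hm'
      subst this
      exact hf'.2 hf.le
    have c1 : ∀ a ∈ A, ∀ b ∈ B, a < b := by
      intro a ha b hb
      obtain ⟨p, hm, hf⟩ := (memA a).1 ha
      obtain ⟨p', hm', hf'⟩ := (memB b).1 hb
      have hle : a ≤ b := (h _ hm _ hm').1 (hf.trans hf').le
      have hne : a ≠ b := by
        rintro rfl
        have := h.snd_inj hm hm'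
        subst this
        exact absurd (hf.trans hf') (lt_irrefl _)
      exact lt_of_le_of_ne hle hne
    have c2 : ∀ a ∈ A, ∀ c ∈ C, ¬ c ≤ a := by
      intro a ha c hc hca
      obtain ⟨p, hm, hf⟩ := (memA a).1 ha
      obtain ⟨p', hm', hf'⟩ := (memC c).1 hc
      exact hf'.1 (((h _ hm' _ hm).2 hca).trans hf.le)
    have c3 : ∀ b ∈ B, ∀ c ∈ C, ¬ b ≤ c := by
      intro b hb c hc hbc
      obtain ⟨p, hm, hf⟩ := (memB b).1 hb
      obtain ⟨p', hm', hf'⟩ := (memC c).1 hc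
      exact hf'.2 (hf.le.trans ((h _ hm _ hm').2 hbc))
    obtain ⟨y, -, -, -, hyA, hyB, hyC⟩ := hext A B C dAB dAC dBC c1 c2 c3
    refine ⟨y, ?_⟩
    have key : ∀ p q, (p, q) ∈ L → ((x ≤ p ↔ y ≤ q) ∧ (p ≤ x ↔ q ≤ y)) := by
      intro p q hm
      have hne : p ≠ x := by rintro rfl; exact hx q hm
      by_cases h1 : p ≤ x
      · -- p < x, so q ∈ A, q < y
        have hpx : p < x := lt_of_le_of_ne h1 hne
        have hq : q ∈ A := (memA q).2 ⟨p, hm, hpx⟩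
        have hqy : q < y := hyA q hq
        constructor
        · constructor
          · intro hxp; exact absurd (le_antisymm h1 hxp) hne
          · intro hyq; exact absurd (hqy.trans_le hyq) (lt_irrefl _)
        · exact ⟨fun _ => hqy.le, fun _ => h1⟩
      · by_cases h2 : x ≤ p
        · -- x < p, so q ∈ B, y < q
          have hxp : x < p := lt_of_le_of_ne h2 (fun h => hne h.symm)
          have hq : q ∈ B := (memB q).2 ⟨p, hm, hxp⟩
          have hyq : y < q := hyB q hq
          constructor
          · exact ⟨fun _ => hyq.le, fun _ => h2⟩
          · constructor
            · intro hpx; exact absurd hpx h1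
            · intro hqy; exact absurd (hyq.trans_le hqy) (lt_irrefl _)
        · -- incomparable, q ∈ C
          have hq : q ∈ C := (memC q).2 ⟨p, hm, h1, h2⟩
          obtain ⟨-, hyq, hqy⟩ := hyC q hq
          exact ⟨⟨fun h => absurd h h2, fun h => absurd h hyq⟩,
                 ⟨fun h => absurd h h1, fun h => absurd h hqy⟩⟩
    intro pq hpq pq' hpq'
    rcases List.mem_append.1 hpq with h1 | h1 <;>
      rcases List.mem_append.1 hpq' with h2 | h2
    · exact h _ h1 _ h2
    · simp only [List.mem_singleton] at h2; subst h2
      exact (key pq.1 pq.2 h1).2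
    · simp only [List.mem_singleton] at h1; subst h1
      exact (key pq'.1 pq'.2 h2).1
    · simp only [List.mem_singleton] at h1 h2; subst h1; subst h2; simp


theorem valid_swap {L : List (P × P)} (h : Valid L) :
    Valid (L.map Prod.swap) := by
  intro pq hpq pq' hpq'
  simp only [List.mem_map] at hpq hpq'
  obtain ⟨⟨a, b⟩, hm, rfl⟩ := hpq
  obtain ⟨⟨a', b'⟩, hm', rfl⟩ := hpq'
  exact (h _ hm _ hm').symm

theorem extend_bwd (hext : Ext P) {L : List (P × P)}
    (h : Valid L) (y : P) : ∃ x, Valid (L ++ [(x, y)]) := by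
  obtain ⟨x, hx⟩ := extend_fwd hext (valid_swap h) y
  refine ⟨x, ?_⟩
  have := valid_swap hx
  simpa [List.map_append, Function.comp] using this

/-- one full step: add z to both domain and range -/
theorem step2 (hext : Ext P) {L : List (P × P)}
    (h : Valid L) (z : P) :
    ∃ L' : List (P × P), Valid L' ∧ L.Sublist L' ∧ (∃ y, (z, y) ∈ L') ∧ (∃ x, (x, z) ∈ L') := by
  obtain ⟨y, hy⟩ := extend_fwd hext h z
  obtain ⟨x, hx⟩ := extend_bwd hext hy z
  refine ⟨(L ++ [(z, y)]) ++ [(x, z)], hx, ?_, ⟨y, ?_⟩, ⟨x, ?_⟩⟩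
  · exact ((L.sublist_append_left _).trans (List.sublist_append_left _ _))
  · simp
  · simp

theorem exists_nontrivial_auto [Countable P] [Infinite P] (hext : Ext P) :
    ∃ g : P ≃o P, ∃ v, g v ≠ v := by
  classical
  have hne : Nonempty P := inferInstance
  obtain ⟨e, he⟩ := exists_surjective_nat P
  -- seed: two incomparable points
  obtain ⟨a⟩ := hne
  obtain ⟨b, -, -, -, -, -, hb⟩ :=
    hext ∅ ∅ {a} (by simp) (by simp) (by simp) (by simp) (by simp) (by simp)
  obtain ⟨hba, hbla, halb⟩ := hb a (by simp)
  have hvalid0 : Valid ([(a, b), (b, a)] : List (P × P)) := by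
    intro pq hpq pq' hpq'
    simp only [List.mem_cons, List.mem_singleton] at hpq hpq'
    rcases hpq with rfl | rfl | h <;> rcases hpq' with rfl | rfl | h' <;>
      first
        | exact iff_of_true le_rfl le_rfl
        | exact absurd h (List.not_mem_nil)
        | exact absurd h' (List.not_mem_nil)
        | exact iff_of_false halb hbla
        | exact iff_of_false hbla halb
  -- the increasing sequence of valid lists
  let Lseq : ℕ → {L : List (P × P) // Valid L} := fun n =>
    Nat.rec ⟨[(a, b), (b, a)], hvalid0⟩
      (fun n prev => ⟨Classical.choose (step2 hext prev.2 (e n)),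
        (Classical.choose_spec (step2 hext prev.2 (e n))).1⟩) n
  have hsub : ∀ n, (Lseq n).1.Sublist (Lseq (n + 1)).1 := fun n =>
    (Classical.choose_spec (step2 hext (Lseq n).2 (e n))).2.1
  have hmono : ∀ {n m}, n ≤ m → (Lseq n).1.Sublist (Lseq m).1 := by
    intro n m h
    induction m with
    | zero => simp_all
    | succ m ih =>
      rcases Nat.lt_or_ge n (m + 1) with h' | h'
      · exact (ih (Nat.lt_succ_iff.1 h')).trans (hsub m)
      · have : n = m + 1 := le_antisymm h h'
        subst this; exact List.Sublist.refl _
  set R : P → P → Prop := fun x y => ∃ n, (x, y) ∈ (Lseq n).1 with hR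
  have hboth : ∀ x y n m, (x, y) ∈ (Lseq n).1 → ∀ x' y', (x', y') ∈ (Lseq m).1 →
      ∃ N, (x, y) ∈ (Lseq N).1 ∧ (x', y') ∈ (Lseq N).1 := by
    intro x y n m h1 x' y' h2
    exact ⟨max n m, (hmono (le_max_left n m)).mem h1, (hmono (le_max_right n m)).mem h2⟩
  have hfun : ∀ {x y y'}, R x y → R x y' → y = y' := by
    rintro x y y' ⟨n, h1⟩ ⟨m, h2⟩
    obtain ⟨N, hN1, hN2⟩ := hboth x y n m h1 x y' h2
    exact (Lseq N).2.fst_inj hN1 hN2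
  have hinj : ∀ {x x' y}, R x y → R x' y → x = x' := by
    rintro x x' y ⟨n, h1⟩ ⟨m, h2⟩
    obtain ⟨N, hN1, hN2⟩ := hboth x y n m h1 x' y h2
    exact (Lseq N).2.snd_inj hN1 hN2
  have hord : ∀ {x y x' y'}, R x y → R x' y' → (x ≤ x' ↔ y ≤ y') := by
    rintro x y x' y' ⟨n, h1⟩ ⟨m, h2⟩
    obtain ⟨N, hN1, hN2⟩ := hboth x y n m h1 x' y' h2
    exact (Lseq N).2 _ hN1 _ hN2
  have htot : ∀ x, ∃ y, R x y := by
    intro x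
    obtain ⟨n, rfl⟩ := he x
    obtain ⟨y, hy⟩ := (Classical.choose_spec (step2 hext (Lseq n).2 (e n))).2.2.1
    exact ⟨y, n + 1, hy⟩
  have hcot : ∀ y, ∃ x, R x y := by
    intro y
    obtain ⟨n, rfl⟩ := he y
    obtain ⟨x, hx⟩ := (Classical.choose_spec (step2 hext (Lseq n).2 (e n))).2.2.2
    exact ⟨x, n + 1, hx⟩
  let f : P → P := fun x => Classical.choose (htot x)
  let f' : P → P := fun y => Classical.choose (hcot y)
  have hf : ∀ x, R x (f x) := fun x => Classical.choose_spec (htot x)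
  have hf' : ∀ y, R (f' y) y := fun y => Classical.choose_spec (hcot y)
  have hleft : ∀ x, f' (f x) = x := fun x => hinj (hf' (f x)) (hf x)
  have hright : ∀ y, f (f' y) = y := fun y => hfun (hf (f' y)) (hf' y)
  refine ⟨⟨⟨f, f', hleft, hright⟩, ?_⟩, a, ?_⟩
  · intro x x'
    exact (hord (hf x) (hf x')).symm
  · have hmem : (a, b) ∈ (Lseq 0).1 := List.mem_cons_self
    have hfa : f a = b := hfun (hf a) ⟨0, hmem⟩
    simpa [hfa] using hba

/-! ### Part 1: construction of the blue set -/

def K (n : ℕ) : ℕ := 4 ^ n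

theorem K_pos (n : ℕ) : 1 ≤ K n := Nat.one_le_pow _ _ (by norm_num)

theorem K_gap {m n : ℕ} (h : m < n) : K m + 2 ≤ K n := by
  have h1 : 4 * K m ≤ K n := by
    have : K (m + 1) ≤ K n := Nat.pow_le_pow_right (by norm_num) h
    simpa [K, pow_succ, mul_comm] using this
  have := K_pos m
  omega

theorem buildChain (hext : Ext P) (C0 : Finset P) (len : ℕ) :
    ∃ l : List P, l.length = len ∧ l.Pairwise (· < ·) ∧
      ∀ p ∈ l, ∀ q ∈ C0, p ≠ q ∧ ¬ p ≤ q ∧ ¬ q ≤ p := by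
  classical
  induction len with
  | zero => exact ⟨[], rfl, List.Pairwise.nil, by simp⟩
  | succ n ih =>
    obtain ⟨l, hlen, hpw, hinc⟩ := ih
    have dAC : Disjoint l.toFinset C0 := by
      rw [Finset.disjoint_left]
      intro p hp hpC
      exact (hinc p (List.mem_toFinset.1 hp) p hpC).1 rfl
    obtain ⟨x, -, -, -, hxA, -, hxC⟩ :=
      hext l.toFinset ∅ C0 (by simp) dAC (by simp)
        (by simp) (fun a ha c hc => (hinc a (List.mem_toFinset.1 ha) c hc).2.2) (by simp)
    refine ⟨l ++ [x], by simp [hlen], ?_, ?_⟩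
    · rw [List.pairwise_append]
      refine ⟨hpw, List.pairwise_singleton _ _, ?_⟩
      intro p hp q hq
      simp only [List.mem_singleton] at hq
      subst hq
      exact hxA p (List.mem_toFinset.2 hp)
    · intro p hp q hq
      rcases List.mem_append.1 hp with h1 | h1
      · exact hinc p h1 q hq
      · simp only [List.mem_singleton] at h1
        subst h1
        exact hxC q hq

open Classical in
noncomputable def orient (x y : P) : P × P := if x ≤ y then (y, x) else (x, y)

theorem orient_not_le {x y : P} (h : x ≠ y) : ¬ (orient x y).1 ≤ (orient x y).2 := by
  unfold orient
  split
  · exact fun hle => h (le_antisymm (by assumption) hle)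
  · assumption

theorem orient_ne {x y : P} (h : x ≠ y) : (orient x y).1 ≠ (orient x y).2 := by
  unfold orient
  split
  · exact h.symm
  · exact h

theorem orient_fst_mem (x y : P) : (orient x y).1 = x ∨ (orient x y).1 = y := by
  unfold orient; split <;> simp

theorem orient_snd_mem (x y : P) : (orient x y).2 = x ∨ (orient x y).2 = y := by
  unfold orient; split <;> simp

theorem buildStage (hext : Ext P) (oldB AE CE : Finset P)
    (hAE : ∀ v ∈ AE, v ∉ oldB) (hCE : ∀ u ∈ CE, u ∉ oldB)
    (hAC : ∀ v ∈ AE, ∀ u ∈ CE, ¬ u ≤ v ∧ u ≠ v) (len : ℕ) :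
    ∃ ch : ℕ → P,
      (∀ i j, i < j → j ≤ len → ch i < ch j) ∧
      (∀ i < len, ∀ q ∈ oldB ∪ AE ∪ CE, ch i ≠ q ∧ ¬ ch i ≤ q ∧ ¬ q ≤ ch i) ∧
      (∀ q ∈ oldB, ch len ≠ q ∧ ¬ ch len ≤ q) ∧
      (∀ v ∈ AE, v < ch len) ∧
      (∀ u ∈ CE, ch len ≠ u ∧ ¬ ch len ≤ u ∧ ¬ u ≤ ch len) := by
  classical
  obtain ⟨l, hlen, hpw, hinc⟩ := buildChain hext (oldB ∪ AE ∪ CE) len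
  set Cw : Finset P := (oldB.filter (fun q => ∀ v ∈ AE, ¬ q ≤ v)) ∪ CE with hCw
  set Aw : Finset P := l.toFinset ∪ AE with hAw
  have hmemA : ∀ a, a ∈ Aw ↔ (a ∈ l ∨ a ∈ AE) := by
    intro a; simp [hAw]
  have hmemC : ∀ c, c ∈ Cw ↔ ((c ∈ oldB ∧ ∀ v ∈ AE, ¬ c ≤ v) ∨ c ∈ CE) := by
    intro c; simp [hCw]
  have dAC : Disjoint Aw Cw := by
    rw [Finset.disjoint_left]
    intro a ha hc
    rcases (hmemA a).1 ha with h1 | h1 <;> rcases (hmemC a).1 hc with h2 | h2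
    · exact (hinc a h1 a (by simp [h2.1])).1 rfl
    · exact (hinc a h1 a (by simp [h2])).1 rfl
    · exact hAE a h1 h2.1
    · exact (hAC a h1 a h2).2 rfl
  have cond2 : ∀ a ∈ Aw, ∀ c ∈ Cw, ¬ c ≤ a := by
    intro a ha c hc
    rcases (hmemA a).1 ha with h1 | h1 <;> rcases (hmemC c).1 hc with h2 | h2
    · exact (hinc a h1 c (by simp [h2.1])).2.2
    · exact (hinc a h1 c (by simp [h2])).2.2
    · exact h2.2 a h1
    · exact (hAC a h1 c h2).1
  obtain ⟨w, -, -, -, hwA, -, hwC⟩ :=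
    hext Aw ∅ Cw (by simp) dAC (by simp) (by simp) cond2 (by simp)
  have e1 : ∀ i (h : i < len), (l ++ [w]).getD i w = l[i]'(by omega) := by
    intro i h
    rw [List.getD_append _ _ _ _ (by omega), List.getD_eq_getElem _ _ (by omega)]
  have e1m : ∀ i, i < len → (l ++ [w]).getD i w ∈ l := by
    intro i h
    rw [e1 i h]
    exact List.getElem_mem _
  have e2 : (l ++ [w]).getD len w = w := by
    rw [List.getD_append_right _ _ _ _ (by omega)]
    simp [hlen]
  refine ⟨fun i => (l ++ [w]).getD i w, ?_, ?_, ?_, ?_, ?_⟩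
  · intro i j hij hj
    beta_reduce
    rcases Nat.lt_or_ge j len with hjl | hjl
    · rw [e1 i (by omega), e1 j hjl]
      exact List.pairwise_iff_getElem.1 hpw i j _ _ hij
    · have hjeq : j = len := by omega
      subst hjeq
      rw [e2]
      exact hwA _ ((hmemA _).2 (Or.inl (e1m i (by omega))))
  · intro i hi q hq
    exact hinc _ (e1m i hi) q hq
  · intro q hq
    beta_reduce
    rcases Classical.em (∀ v ∈ AE, ¬ q ≤ v) with hf | hf
    · have := hwC q ((hmemC q).2 (Or.inl ⟨hq, hf⟩))
      rw [e2]
      exact ⟨this.1, this.2.1⟩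
    · push_neg at hf
      obtain ⟨v, hv, hqv⟩ := hf
      have hvw : v < w := hwA v ((hmemA v).2 (Or.inr hv))
      rw [e2]
      constructor
      · rintro rfl
        exact absurd (hvw.trans_le hqv) (lt_irrefl _)
      · intro hwq
        exact absurd (hvw.trans_le (hwq.trans hqv)) (lt_irrefl _)
  · intro v hv
    beta_reduce
    rw [e2]
    exact hwA v ((hmemA v).2 (Or.inr hv))
  · intro u hu
    beta_reduce
    rw [e2]
    exact hwC u ((hmemC u).2 (Or.inr hu))

structure Good (ep : ℕ → P × P) (t : ℕ → ℕ → P) (n : ℕ) : Prop where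
  lt : ∀ m < n, ∀ i j, i < j → j ≤ K m → t m i < t m j
  rel : ∀ m < n, ∀ m' < n, ∀ i ≤ K m, ∀ j ≤ K m',
    t m i < t m' j → (m = m' ∧ i < j) ∨ (j = K m' ∧ m < m')
  inj : ∀ m < n, ∀ m' < n, ∀ i ≤ K m, ∀ j ≤ K m',
    t m i = t m' j → m = m' ∧ i = j
  sep : ∀ m < n, (ep m).1 ≠ (ep m).2 →
    (∀ m' < m, ∀ i ≤ K m', (ep m).1 ≠ t m' i) →
    (∀ m' < m, ∀ i ≤ K m', (ep m).2 ≠ t m' i) →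
    (orient (ep m).1 (ep m).2).2 < t m (K m) ∧
    ¬ (orient (ep m).1 (ep m).2).1 ≤ t m (K m) ∧
    ¬ t m (K m) ≤ (orient (ep m).1 (ep m).2).1

theorem step1 (hext : Ext P) (ep : ℕ → P × P) (t : ℕ → ℕ → P) (n : ℕ)
    (h : Good ep t n) :
    ∃ t' : ℕ → ℕ → P, (∀ m, m ≠ n → t' m = t m) ∧ Good ep t' (n + 1) := by
  classical
  set x := (ep n).1 with hx
  set y := (ep n).2 with hy
  set oldB : Finset P :=
    (Finset.range n).biUnion (fun m => (Finset.range (K m + 1)).image (t m)) with holdB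
  have memOldB : ∀ p, p ∈ oldB ↔ ∃ m, m < n ∧ ∃ i, i ≤ K m ∧ t m i = p := by
    intro p
    simp only [holdB, Finset.mem_biUnion, Finset.mem_range, Finset.mem_image]
    constructor
    · rintro ⟨m, hm, i, hi, rfl⟩
      exact ⟨m, hm, i, by omega, rfl⟩
    · rintro ⟨m, hm, i, hi, rfl⟩
      exact ⟨m, hm, i, by omega, rfl⟩
  have main : ∀ (AE CE : Finset P), (∀ p ∈ AE, p ∉ oldB) → (∀ p ∈ CE, p ∉ oldB) →
      (∀ v ∈ AE, ∀ u ∈ CE, ¬ u ≤ v ∧ u ≠ v) →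
      ∃ ch : ℕ → P,
        ((∀ i j, i < j → j ≤ K n → ch i < ch j) ∧
         (∀ m' < n, ∀ j ≤ K m', ∀ i ≤ K n,
            (ch i ≠ t m' j ∧ ¬ ch i ≤ t m' j) ∧ (i < K n → ¬ t m' j ≤ ch i))) ∧
        (∀ v ∈ AE, v < ch (K n)) ∧
        (∀ u ∈ CE, ch (K n) ≠ u ∧ ¬ ch (K n) ≤ u ∧ ¬ u ≤ ch (K n)) := by
    intro AE CE hAE hCE hACE
    obtain ⟨ch, hc1, hc2, hc3, hc4, hc5⟩ := buildStage hext oldB AE CE hAE hCE hACE (K n)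
    refine ⟨ch, ⟨hc1, ?_⟩, hc4, hc5⟩
    intro m' hm' j hj i hi
    have hmem : t m' j ∈ oldB := (memOldB _).2 ⟨m', hm', j, hj, rfl⟩
    rcases Nat.lt_or_ge i (K n) with h3 | h3
    · have := hc2 i h3 (t m' j) (by simp only [Finset.mem_union]; exact Or.inl (Or.inl hmem))
      exact ⟨⟨this.1, this.2.1⟩, fun _ => this.2.2⟩
    · have hieq : i = K n := by omega
      subst hieq
      exact ⟨hc3 (t m' j) hmem, fun hh => absurd hh (lt_irrefl _).elim⟩
  have finish : ∀ ch : ℕ → P,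
      ((∀ i j, i < j → j ≤ K n → ch i < ch j) ∧
       (∀ m' < n, ∀ j ≤ K m', ∀ i ≤ K n,
          (ch i ≠ t m' j ∧ ¬ ch i ≤ t m' j) ∧ (i < K n → ¬ t m' j ≤ ch i))) →
      (((ep n).1 ≠ (ep n).2 →
        (∀ m' < n, ∀ i ≤ K m', (ep n).1 ≠ t m' i) →
        (∀ m' < n, ∀ i ≤ K m', (ep n).2 ≠ t m' i) →
        (orient x y).2 < ch (K n) ∧
        ¬ (orient x y).1 ≤ ch (K n) ∧ ¬ ch (K n) ≤ (orient x y).1)) →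
      ∃ t' : ℕ → ℕ → P, (∀ m, m ≠ n → t' m = t m) ∧ Good ep t' (n + 1) := by
    rintro ch ⟨hc1, hrel⟩ hsepn
    refine ⟨fun m => if m = n then ch else t m, fun m hm => if_neg hm, ?_⟩
    have ht' : ∀ m : ℕ, m < n → (if m = n then ch else t m) = t m := by
      intro m hm; exact if_neg (by omega)
    constructor
    case lt =>
      intro m hm i j hij hj
      rcases Nat.lt_or_ge m n with h1 | h1
      · rw [ht' m h1]; exact h.lt m h1 i j hij hj
      · have hmeq : n = m := by omega
        subst hmeq
        simp only [if_pos rfl]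
        exact hc1 i j hij hj
    case rel =>
      intro m hm m' hm' i hi j hj hlt
      rcases Nat.lt_or_ge m n with h1 | h1 <;> rcases Nat.lt_or_ge m' n with h2 | h2
      · rw [ht' m h1, ht' m' h2] at hlt
        exact h.rel m h1 m' h2 i hi j hj hlt
      · have hmeq : n = m' := by omega
        subst hmeq
        rw [ht' m h1, if_pos rfl] at hlt
        rcases Nat.lt_or_ge j (K n) with h3 | h3
        · exact absurd hlt.le ((hrel m h1 i hi j hj).2 h3)
        · have : j = K n := by omega
          exact Or.inr ⟨this, by omega⟩
      · have hmeq : n = m := by omega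
        subst hmeq
        rw [ht' m' h2, if_pos rfl] at hlt
        exact absurd hlt.le ((hrel m' h2 j hj i hi).1).2
      · have hmn1 : n = m := by omega
        subst hmn1
        have hmn2 : n = m' := by omega
        subst hmn2
        simp only [if_pos rfl] at hlt
        rcases Nat.lt_trichotomy i j with h3 | h3 | h3
        · exact Or.inl ⟨rfl, h3⟩
        · subst h3; exact absurd hlt (lt_irrefl _)
        · exact absurd (hc1 j i h3 hi) (asymm hlt)
    case inj =>
      intro m hm m' hm' i hi j hj heq
      rcases Nat.lt_or_ge m n with h1 | h1 <;> rcases Nat.lt_or_ge m' n with h2 | h2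
      · rw [ht' m h1, ht' m' h2] at heq
        exact h.inj m h1 m' h2 i hi j hj heq
      · have hmeq : n = m' := by omega
        subst hmeq
        rw [ht' m h1, if_pos rfl] at heq
        exact absurd heq.symm ((hrel m h1 i hi j hj).1).1
      · have hmeq : n = m := by omega
        subst hmeq
        rw [ht' m' h2, if_pos rfl] at heq
        exact absurd heq ((hrel m' h2 j hj i hi).1).1
      · have hmn1 : n = m := by omega
        subst hmn1
        have hmn2 : n = m' := by omega
        subst hmn2
        simp only [if_pos rfl] at heq
        rcases Nat.lt_trichotomy i j with h3 | h3 | h3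
        · exact absurd heq (hc1 i j h3 hj).ne
        · exact ⟨rfl, h3⟩
        · exact absurd heq.symm (hc1 j i h3 hi).ne
    case sep =>
      intro m hm hne hnx hny
      rcases Nat.lt_or_ge m n with h1 | h1
      · have hres := h.sep m h1 hne (fun m' hm' i hi => by
            have := hnx m' hm' i hi
            rwa [ht' m' (by omega)] at this)
          (fun m' hm' i hi => by
            have := hny m' hm' i hi
            rwa [ht' m' (by omega)] at this)
        rwa [ht' m h1]
      · have hmn : n = m := by omega
        subst hmn
        simp only [if_pos rfl]
        exact hsepn hne (fun m' hm' i hi => by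
            have := hnx m' hm' i hi
            rwa [ht' m' (by omega)] at this)
          (fun m' hm' i hi => by
            have := hny m' hm' i hi
            rwa [ht' m' (by omega)] at this)
  by_cases hskip : x = y ∨ x ∈ oldB ∨ y ∈ oldB
  · obtain ⟨ch, hmain, -, -⟩ := main ∅ ∅ (by simp) (by simp) (by simp)
    refine finish ch hmain ?_
    intro hne hnx hny
    exfalso
    rcases hskip with h' | h' | h'
    · exact hne h'
    · obtain ⟨m', hm', i, hi, hti⟩ := (memOldB x).1 h'
      exact hnx m' hm' i hi hti.symm
    · obtain ⟨m', hm', i, hi, hti⟩ := (memOldB y).1 h'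
      exact hny m' hm' i hi hti.symm
  · push_neg at hskip
    obtain ⟨hxy, hxB, hyB⟩ := hskip
    set u := (orient x y).1 with hu
    set v := (orient x y).2 with hv
    have hvB : v ∉ oldB := by
      rcases orient_snd_mem x y with h' | h' <;> rw [hv, h']
      exacts [hxB, hyB]
    have huB : u ∉ oldB := by
      rcases orient_fst_mem x y with h' | h' <;> rw [hu, h']
      exacts [hxB, hyB]
    obtain ⟨ch, hmain, hc4, hc5⟩ := main {v} {u} (by simpa using hvB) (by simpa using huB)
      (by simp only [Finset.mem_singleton]
          rintro v' rfl u' rfl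
          exact ⟨orient_not_le hxy, orient_ne hxy⟩)
    refine finish ch hmain ?_
    intro hne hnx hny
    refine ⟨hc4 v (Finset.mem_singleton_self v), ?_, ?_⟩
    · exact (hc5 u (Finset.mem_singleton_self u)).2.2
    · exact (hc5 u (Finset.mem_singleton_self u)).2.1

noncomputable def stageFun [Nonempty P] (hext : Ext P) (ep : ℕ → P × P) : ∀ n : ℕ, {t : ℕ → ℕ → P // Good ep t n} :=
  fun n => Nat.rec
    ⟨fun _ _ => Classical.arbitrary P, by
      constructor <;> (intro m hm; exact absurd hm (Nat.not_lt_zero _))⟩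
    (fun n prev => ⟨Classical.choose (step1 hext ep prev.1 n prev.2),
      (Classical.choose_spec (step1 hext ep prev.1 n prev.2)).2⟩) n

theorem stageFun_succ_eq [Nonempty P] (hext : Ext P) (ep : ℕ → P × P) (n m : ℕ) (hm : m ≠ n) :
    (stageFun hext ep (n + 1)).1 m = (stageFun hext ep n).1 m := by
  have := (Classical.choose_spec
    (step1 hext ep (stageFun hext ep n).1 n (stageFun hext ep n).2)).1 m hm
  exact this

theorem stage_stab [Nonempty P] (hext : Ext P) (ep : ℕ → P × P) :
    ∀ n' n, n ≤ n' → ∀ m, m < n → (stageFun hext ep n').1 m = (stageFun hext ep n).1 m := by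
  intro n'
  induction n' with
  | zero =>
    intro n hn m hm
    omega
  | succ n' ih =>
    intro n hn m hm
    rcases Nat.lt_or_ge n (n' + 1) with h1 | h1
    · have h2 : n ≤ n' := by omega
      rw [stageFun_succ_eq hext ep n' m (by omega)]
      exact ih n h2 m hm
    · have : n = n' + 1 := by omega
      subst this
      rfl

noncomputable def tB [Nonempty P] (hext : Ext P) (ep : ℕ → P × P) : ℕ → ℕ → P :=
  fun m => (stageFun hext ep (m + 1)).1 m

section Global

variable [Nonempty P] (hext : Ext P) (ep : ℕ → P × P)

theorem tB_lt {m i j : ℕ} (hij : i < j) (hj : j ≤ K m) :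
    tB hext ep m i < tB hext ep m j :=
  (stageFun hext ep (m + 1)).2.lt m (Nat.lt_succ_self m) i j hij hj

theorem tB_eq_stage {N m : ℕ} (hm : m < N) : (stageFun hext ep N).1 m = tB hext ep m :=
  stage_stab hext ep N (m + 1) hm m (Nat.lt_succ_self m)

theorem tB_rel {m m' i j : ℕ} (hi : i ≤ K m) (hj : j ≤ K m')
    (hlt : tB hext ep m i < tB hext ep m' j) :
    (m = m' ∧ i < j) ∨ (j = K m' ∧ m < m') := by
  set N := max m m' + 1 with hN
  have h1 : m < N := by omega
  have h2 : m' < N := by omega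
  refine (stageFun hext ep N).2.rel m h1 m' h2 i hi j hj ?_
  rw [tB_eq_stage hext ep h1, tB_eq_stage hext ep h2]
  exact hlt

theorem tB_inj {m m' i j : ℕ} (hi : i ≤ K m) (hj : j ≤ K m')
    (heq : tB hext ep m i = tB hext ep m' j) : m = m' ∧ i = j := by
  set N := max m m' + 1 with hN
  have h1 : m < N := by omega
  have h2 : m' < N := by omega
  refine (stageFun hext ep N).2.inj m h1 m' h2 i hi j hj ?_
  rw [tB_eq_stage hext ep h1, tB_eq_stage hext ep h2]
  exact heq

theorem tB_sep {m : ℕ} (hne : (ep m).1 ≠ (ep m).2)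
    (hnx : ∀ m' < m, ∀ i ≤ K m', (ep m).1 ≠ tB hext ep m' i)
    (hny : ∀ m' < m, ∀ i ≤ K m', (ep m).2 ≠ tB hext ep m' i) :
    (orient (ep m).1 (ep m).2).2 < tB hext ep m (K m) ∧
    ¬ (orient (ep m).1 (ep m).2).1 ≤ tB hext ep m (K m) ∧
    ¬ tB hext ep m (K m) ≤ (orient (ep m).1 (ep m).2).1 := by
  have h1 : m < m + 1 := Nat.lt_succ_self m
  have := (stageFun hext ep (m + 1)).2.sep m h1 hne
    (fun m' hm' i hi => by
      rw [tB_eq_stage hext ep (by omega : m' < m + 1)]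
      exact hnx m' hm' i hi)
    (fun m' hm' i hi => by
      rw [tB_eq_stage hext ep (by omega : m' < m + 1)]
      exact hny m' hm' i hi)
  rwa [tB_eq_stage hext ep h1] at this

end Global

/-! ### Rigidity -/

section Rigid

variable (t : ℕ → ℕ → P)

def BlueP (p : P) : Prop := ∃ m, ∃ i, i ≤ K m ∧ p = t m i

def DD (q : P) : Set P := {p | BlueP t p ∧ p < q}

variable
  (hlt : ∀ m i j, i < j → j ≤ K m → t m i < t m j)
  (hrel : ∀ m m' i j, i ≤ K m → j ≤ K m' →
    t m i < t m' j → (m = m' ∧ i < j) ∨ (j = K m' ∧ m < m'))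
  (hinj : ∀ m m' i j, i ≤ K m → j ≤ K m' → t m i = t m' j → m = m' ∧ i = j)

include hlt hrel hinj

theorem DD_bot (m : ℕ) : DD t (t m 0) = ∅ := by
  ext p
  simp only [DD, Set.mem_setOf_eq, Set.mem_empty_iff_false, iff_false, not_and]
  rintro ⟨m', j, hj, rfl⟩ hlt'
  rcases hrel m' m j 0 hj (Nat.zero_le _) hlt' with ⟨rfl, hj0⟩ | ⟨h0, -⟩
  · omega
  · have := K_pos m; omega

theorem DD_nontop (m i : ℕ) (hi : i < K m) : DD t (t m i) = t m '' Set.Iio i := by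
  ext p
  simp only [DD, Set.mem_setOf_eq, Set.mem_image, Set.mem_Iio]
  constructor
  · rintro ⟨⟨m', j, hj, rfl⟩, hlt'⟩
    rcases hrel m' m j i hj (by omega) hlt' with ⟨rfl, hji⟩ | ⟨h0, -⟩
    · exact ⟨j, hji, rfl⟩
    · omega
  · rintro ⟨j, hji, rfl⟩
    exact ⟨⟨m, j, by omega, rfl⟩, hlt m j i hji (by omega)⟩

theorem DD_top_sub (m : ℕ) :
    DD t (t m (K m)) ⊆ {p | (∃ j < K m, p = t m j) ∨ (∃ m' < m, ∃ j ≤ K m', p = t m' j)} := by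
  rintro p ⟨⟨m', j, hj, rfl⟩, hlt'⟩
  rcases hrel m' m j (K m) hj le_rfl hlt' with ⟨rfl, hji⟩ | ⟨-, hmm⟩
  · exact Or.inl ⟨j, hji, rfl⟩
  · exact Or.inr ⟨m', hmm, j, hj, rfl⟩

theorem DD_top_mem (m j : ℕ) (hj : j < K m) : t m j ∈ DD t (t m (K m)) :=
  ⟨⟨m, j, by omega, rfl⟩, hlt m j (K m) hj le_rfl⟩

theorem Ubot (q : P) (hq : BlueP t q) (hD : DD t q = ∅) : ∃ m, q = t m 0 := by
  obtain ⟨m, j, hj, rfl⟩ := hq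
  rcases Nat.eq_zero_or_pos j with rfl | hj0
  · exact ⟨m, rfl⟩
  · exfalso
    have : t m 0 ∈ DD t (t m j) := ⟨⟨m, 0, by omega, rfl⟩, hlt m 0 j hj0 hj⟩
    rw [hD] at this
    exact this

theorem Umid (m i : ℕ) (hi : i + 1 < K m) (q : P) (hq : BlueP t q)
    (hD : DD t q = t m '' Set.Iio (i + 1)) : q = t m (i + 1) := by
  obtain ⟨m', j, hj, rfl⟩ := hq
  have hmem : t m i ∈ DD t (t m' j) := by
    rw [hD]; exact ⟨i, Set.mem_Iio.2 (by omega), rfl⟩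
  have hlt' : t m i < t m' j := hmem.2
  rcases hrel m m' i j (by omega) hj hlt' with ⟨rfl, hij⟩ | ⟨rfl, hmm⟩
  · rcases Nat.lt_or_ge (i + 1) j with h3 | h3
    · exfalso
      have : t m (i + 1) ∈ DD t (t m j) := ⟨⟨m, i + 1, by omega, rfl⟩, hlt m (i + 1) j h3 hj⟩
      rw [hD] at this
      obtain ⟨j', hj', heq⟩ := this
      have hj'lt : j' < i + 1 := hj'
      have := (hinj m m j' (i + 1) (by omega) (by omega) heq).2
      omega
    · congr 1; omega
  · exfalso
    have : t m' 0 ∈ DD t (t m' (K m')) :=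
      DD_top_mem t hlt hrel hinj m' 0 (by have := K_pos m'; omega)
    rw [hD] at this
    obtain ⟨j', hj', heq⟩ := this
    have hj'lt : j' < i + 1 := hj'
    have := (hinj m m' j' 0 (by omega) (Nat.zero_le _) heq).1
    omega

theorem Utop (m : ℕ) (q : P) (hq : BlueP t q) (hD : DD t q = DD t (t m (K m))) :
    q = t m (K m) := by
  obtain ⟨m', j, hj, rfl⟩ := hq
  have hmem : t m (K m - 1) ∈ DD t (t m' j) := by
    rw [hD]; exact DD_top_mem t hlt hrel hinj m (K m - 1) (by have := K_pos m; omega)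
  rcases hrel m m' (K m - 1) j (by have := K_pos m; omega) hj hmem.2 with ⟨rfl, hij⟩ | ⟨rfl, hmm⟩
  · have hj' : j = K m := by have := K_pos m; omega
    rw [hj']
  · exfalso
    have h0 : t m' 0 ∈ DD t (t m' (K m')) :=
      DD_top_mem t hlt hrel hinj m' 0 (by have := K_pos m'; omega)
    rw [hD] at h0
    have := DD_top_sub t hlt hrel hinj m h0
    rcases this with ⟨j', hj', heq⟩ | ⟨m'', hm'', j', hj', heq⟩
    · have := (hinj m' m 0 j' (Nat.zero_le _) (by omega) heq).1
      omega
    · have := (hinj m' m'' 0 j' (Nat.zero_le _) (by omega) heq).1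
      omega

def DCh (b : P) (l : ℕ) : Prop :=
  ∃ f : ℕ → P, f 0 = b ∧ ∀ i < l, BlueP t (f i) ∧ DD t (f i) = f '' Set.Iio i

theorem DCh_mono {b : P} {l l' : ℕ} (h : l' ≤ l) (hd : DCh t b l) : DCh t b l' := by
  obtain ⟨f, hf0, hf⟩ := hd
  exact ⟨f, hf0, fun i hi => hf i (by omega)⟩

theorem DCh_chain (m : ℕ) : DCh t (t m 0) (K m) := by
  refine ⟨t m, rfl, fun i hi => ⟨⟨m, i, by omega, rfl⟩, DD_nontop t hlt hrel hinj m i hi⟩⟩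

theorem DCh_max (m l : ℕ) (hd : DCh t (t m 0) l) : l ≤ K m + 1 := by
  by_contra hcon
  push_neg at hcon
  obtain ⟨f, hf0, hf⟩ := hd
  have claim : ∀ i, i < K m → f i = t m i := by
    intro i
    induction i using Nat.strong_induction_on with
    | _ i ih =>
      intro hi
      match i with
      | 0 => exact hf0
      | Nat.succ i =>
        have hD : DD t (f (i + 1)) = t m '' Set.Iio (i + 1) := by
          rw [(hf (i + 1) (by omega)).2]
          ext p
          simp only [Set.mem_image, Set.mem_Iio]
          constructor
          · rintro ⟨j, hji, rfl⟩
            exact ⟨j, hji, (ih j (by omega) (by omega)).symm⟩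
          · rintro ⟨j, hji, rfl⟩
            exact ⟨j, hji, ih j (by omega) (by omega)⟩
        exact Umid t hlt hrel hinj m i hi _ (hf (i + 1) (by omega)).1 hD
  have himg : f '' Set.Iio (K m) = t m '' Set.Iio (K m) := by
    ext p
    simp only [Set.mem_image, Set.mem_Iio]
    constructor
    · rintro ⟨j, hji, rfl⟩
      exact ⟨j, hji, (claim j hji).symm⟩
    · rintro ⟨j, hji, rfl⟩
      exact ⟨j, hji, claim j hji⟩
  have hfKm : f (K m) = t m (K m) := by
    have hq := (hf (K m) (by omega)).1
    have hD : DD t (f (K m)) = t m '' Set.Iio (K m) := by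
      rw [(hf (K m) (by omega)).2, himg]
    obtain ⟨m', j, hj, hfeq⟩ := hq
    have hmem : t m (K m - 1) ∈ DD t (f (K m)) := by
      rw [hD]; exact ⟨K m - 1, Set.mem_Iio.2 (by have := K_pos m; omega), rfl⟩
    rw [hfeq] at hmem ⊢
    rcases hrel m m' (K m - 1) j (by have := K_pos m; omega) hj hmem.2 with
      ⟨rfl, hij⟩ | ⟨rfl, hmm⟩
    · have hj' : j = K m := by have := K_pos m; omega
      rw [hj']
    · exfalso
      have h0 : t m' 0 ∈ DD t (f (K m)) := by
        rw [hfeq]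
        exact DD_top_mem t hlt hrel hinj m' 0 (by have := K_pos m'; omega)
      rw [hD] at h0
      obtain ⟨j', hj', heq⟩ := h0
      have hj'lt : j' < K m := hj'
      have := (hinj m m' j' 0 (by omega) (Nat.zero_le _) heq).1
      omega
  exfalso
  have hq := (hf (K m + 1) (by omega)).1
  have hD : DD t (f (K m + 1)) = f '' Set.Iio (K m + 1) := (hf (K m + 1) (by omega)).2
  have hmem : t m (K m) ∈ DD t (f (K m + 1)) := by
    rw [hD]
    exact ⟨K m, Set.mem_Iio.2 (by omega), hfKm⟩
  obtain ⟨m', j, hj, hfeq⟩ := hq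
  rw [hfeq] at hmem hD
  rcases hrel m m' (K m) j le_rfl hj hmem.2 with ⟨rfl, hij⟩ | ⟨rfl, hmm⟩
  · omega
  · have h0 : t m' 0 ∈ DD t (t m' (K m')) :=
      DD_top_mem t hlt hrel hinj m' 0 (by have := K_pos m'; omega)
    rw [hD] at h0
    obtain ⟨j', hj', heq⟩ := h0
    have hj'lt : j' < K m + 1 := hj'
    rcases Nat.lt_or_ge j' (K m) with h3 | h3
    · rw [claim j' h3] at heq
      have := (hinj m m' j' 0 (by omega) (Nat.zero_le _) heq).1
      omega
    · have hj'' : j' = K m := by omega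
      subst hj''
      rw [hfKm] at heq
      have := (hinj m m' (K m) 0 le_rfl (Nat.zero_le _) heq).1
      omega

theorem DD_g (g : P ≃o P) (hgB : ∀ p, BlueP t (g p) ↔ BlueP t p) (q : P) :
    DD t (g q) = g '' DD t q := by
  ext p
  constructor
  · rintro ⟨hb, hp⟩
    refine ⟨g.symm p, ⟨?_, ?_⟩, g.apply_symm_apply p⟩
    · have h2 := hgB (g.symm p)
      rw [g.apply_symm_apply] at h2
      exact h2.1 hb
    · have h3 : g.symm p < g.symm (g q) := (OrderIso.lt_iff_lt g.symm).2 hp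
      rwa [g.symm_apply_apply] at h3
  · rintro ⟨a, ⟨hb, ha⟩, rfl⟩
    exact ⟨(hgB a).2 hb, (OrderIso.lt_iff_lt g).2 ha⟩

theorem DCh_g (g : P ≃o P) (hgB : ∀ p, BlueP t (g p) ↔ BlueP t p) {b : P} {l : ℕ}
    (hd : DCh t b l) : DCh t (g b) l := by
  obtain ⟨f, hf0, hf⟩ := hd
  refine ⟨g ∘ f, by simp [hf0], fun i hi => ⟨(hgB _).2 (hf i hi).1, ?_⟩⟩
  show DD t (g (f i)) = (g ∘ f) '' Set.Iio i
  rw [DD_g t hlt hrel hinj g hgB, (hf i hi).2, Set.image_image]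
  rfl

theorem fix_blue (g : P ≃o P) (hgB : ∀ p, BlueP t (g p) ↔ BlueP t p) :
    ∀ m, ∀ i ≤ K m, g (t m i) = t m i := by
  have hsymmB : ∀ p, BlueP t (g.symm p) ↔ BlueP t p := by
    intro p
    have h2 := hgB (g.symm p)
    rw [g.apply_symm_apply] at h2
    exact h2.symm
  have himgfix : ∀ (s : Set P), (∀ p ∈ s, g p = p) → g '' s = s := by
    intro s hs
    ext p
    constructor
    · rintro ⟨a, ha, rfl⟩
      rw [hs a ha]
      exact ha
    · intro hp
      exact ⟨p, hp, hs p hp⟩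
  have hbot : ∀ m, g (t m 0) = t m 0 := by
    intro m
    have hBlue : BlueP t (g (t m 0)) := (hgB _).2 ⟨m, 0, Nat.zero_le _, rfl⟩
    have hDe : DD t (g (t m 0)) = ∅ := by
      rw [DD_g t hlt hrel hinj g hgB, DD_bot t hlt hrel hinj m]
      simp
    obtain ⟨m', hm'⟩ := Ubot t hlt hrel hinj _ hBlue hDe
    by_cases hmm : m' = m
    · rw [hm', hmm]
    · exfalso
      have h1 : DCh t (t m' 0) (K m) := by
        rw [← hm']
        exact DCh_g t hlt hrel hinj g hgB (DCh_chain t hlt hrel hinj m)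
      have e2 : g.symm (t m' 0) = t m 0 := by
        rw [← hm', g.symm_apply_apply]
      have h2 : DCh t (t m 0) (K m') := by
        rw [← e2]
        exact DCh_g t hlt hrel hinj g.symm hsymmB (DCh_chain t hlt hrel hinj m')
      have c1 := DCh_max t hlt hrel hinj m' (K m) h1
      have c2 := DCh_max t hlt hrel hinj m (K m') h2
      rcases Nat.lt_or_ge m' m with h | h
      · have := K_gap h
        omega
      · have := K_gap (lt_of_le_of_ne h (Ne.symm hmm))
        omega
  have hnon : ∀ m i, i < K m → g (t m i) = t m i := by
    intro m i
    induction i using Nat.strong_induction_on with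
    | _ i ih =>
      intro hi
      rcases i with _ | i
      · exact hbot m
      · have hBlue : BlueP t (g (t m (i + 1))) := (hgB _).2 ⟨m, i + 1, by omega, rfl⟩
        have hDe : DD t (g (t m (i + 1))) = t m '' Set.Iio (i + 1) := by
          rw [DD_g t hlt hrel hinj g hgB, DD_nontop t hlt hrel hinj m (i + 1) hi]
          apply himgfix
          rintro p ⟨j, hj, rfl⟩
          have hjlt : j < i + 1 := hj
          exact ih j (by omega) (by omega)
        exact Umid t hlt hrel hinj m i hi _ hBlue hDe
  intro m
  induction m using Nat.strong_induction_on with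
  | _ m ihm =>
    intro i hi
    rcases Nat.lt_or_ge i (K m) with h | h
    · exact hnon m i h
    · have hieq : i = K m := by omega
      subst hieq
      have hBlue : BlueP t (g (t m (K m))) := (hgB _).2 ⟨m, K m, le_rfl, rfl⟩
      have hDe : DD t (g (t m (K m))) = DD t (t m (K m)) := by
        rw [DD_g t hlt hrel hinj g hgB]
        apply himgfix
        intro p hp
        rcases DD_top_sub t hlt hrel hinj m hp with ⟨j, hj, rfl⟩ | ⟨m', hm', j, hj, rfl⟩
        · exact hnon m j hj
        · exact ihm m' hm' j hj
      exact Utop t hlt hrel hinj m _ hBlue hDe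

end Rigid

end UPO12

/-- The universal homogeneous partial order `ℙ` has
distinguishing number 2. -/
theorem universal_partial_order_distinguishing_number_two
    (P : Type*) [Countable P] [Infinite P] [PartialOrder P]
    (hext : ∀ A B C : Finset P, Disjoint A B → Disjoint A C → Disjoint B C →
      (∀ a ∈ A, ∀ b ∈ B, a < b) →
      (∀ a ∈ A, ∀ c ∈ C, ¬ c ≤ a) →
      (∀ b ∈ B, ∀ c ∈ C, ¬ b ≤ c) →
      ∃ x, x ∉ A ∧ x ∉ B ∧ x ∉ C ∧ (∀ a ∈ A, a < x) ∧ (∀ b ∈ B, x < b) ∧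
        ∀ c ∈ C, x ≠ c ∧ ¬ x ≤ c ∧ ¬ c ≤ x) :
    (∃ c : P → Bool, ∀ g : P ≃o P, (∀ v, c (g v) = c v) → ∀ v, g v = v) ∧
    (∃ g : P ≃o P, ∃ v, g v ≠ v) := by
  classical
  have hExt : UPO12.Ext P := hext
  refine ⟨?_, UPO12.exists_nontrivial_auto hExt⟩
  obtain ⟨ep, hep⟩ := exists_surjective_nat (P × P)
  set t := UPO12.tB hExt ep with ht
  have hlt : ∀ m i j, i < j → j ≤ UPO12.K m → t m i < t m j := by
    intro m i j hij hj
    exact UPO12.tB_lt hExt ep hij hj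
  have hrel : ∀ m m' i j, i ≤ UPO12.K m → j ≤ UPO12.K m' →
      t m i < t m' j → (m = m' ∧ i < j) ∨ (j = UPO12.K m' ∧ m < m') := by
    intro m m' i j hi hj h
    exact UPO12.tB_rel hExt ep hi hj h
  have hinj : ∀ m m' i j, i ≤ UPO12.K m → j ≤ UPO12.K m' →
      t m i = t m' j → m = m' ∧ i = j := by
    intro m m' i j hi hj h
    exact UPO12.tB_inj hExt ep hi hj h
  refine ⟨fun p => decide (UPO12.BlueP t p), ?_⟩
  intro g hc
  have hgB : ∀ p, UPO12.BlueP t (g p) ↔ UPO12.BlueP t p := by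
    intro p
    have := hc p
    rwa [decide_eq_decide] at this
  have hfix := UPO12.fix_blue t hlt hrel hinj g hgB
  intro v
  by_contra hnev
  have hnBv : ¬ UPO12.BlueP t v := by
    rintro ⟨m, i, hi, rfl⟩
    exact hnev (hfix m i hi)
  have hnBgv : ¬ UPO12.BlueP t (g v) := fun hb => hnBv ((hgB v).1 hb)
  obtain ⟨m, hm⟩ := hep (v, g v)
  have hxv : (ep m).1 = v := by rw [hm]
  have hyv : (ep m).2 = g v := by rw [hm]
  have hsep := UPO12.tB_sep hExt ep (m := m) ?_ ?_ ?_
  rotate_left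
  · rw [hxv, hyv]
    exact fun h => hnev h.symm
  · intro m' hm' i hi heq
    rw [hxv] at heq
    exact hnBv ⟨m', i, hi, heq⟩
  · intro m' hm' i hi heq
    rw [hyv] at heq
    exact hnBgv ⟨m', i, hi, heq⟩
  rw [hxv, hyv] at hsep
  have hw : g (t m (UPO12.K m)) = t m (UPO12.K m) := hfix m (UPO12.K m) le_rfl
  by_cases hle : v ≤ g v
  · have horient : UPO12.orient v (g v) = (g v, v) := by
      simp [UPO12.orient, if_pos hle]
    rw [horient] at hsep
    have h1 : g v < g (t m (UPO12.K m)) := (OrderIso.lt_iff_lt g).2 hsep.1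
    rw [hw] at h1
    exact hsep.2.1 h1.le
  · have horient : UPO12.orient v (g v) = (v, g v) := by
      simp [UPO12.orient, if_neg hle]
    rw [horient] at hsep
    have h1 : g v < g (t m (UPO12.K m)) := by
      rw [hw]
      exact hsep.1
    have h2 : v < t m (UPO12.K m) := (OrderIso.lt_iff_lt g).1 h1
    exact hsep.2.1 h2.le
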